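/- Fix natural numbers $n \geq 1$ and $d \geq 1$. For every natural number $i$ with $1 \leq i \leq n$, $$\frac{1}{d} - 1 \;\leq\; \frac{n}{d\, i} - \frac{1}{1-(1-\frac{i}{n})^d} \;\leq\; 0.$$ -/

import Mathlib

theorem f_bounds (n d : ℕ) (hn : 1 ≤ n) (hd : 1 ≤ d) :
    ∀ i : ℕ, 1 ≤ i → i ≤ n →
      1 / (d : ℝ) - 1 ≤ (n : ℝ) / (d * i) - 1 / (1 - (1 - (i : ℝ) / n) ^ d) ∧
      (n : ℝ) / (d * i) - 1 / (1 - (1 - (i : ℝ) / n) ^ d) ≤ 0 := by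
  intro i h1 h2
  have hn0 : (0:ℝ) < n := Nat.cast_pos.mpr hn
  have hi0 : (0:ℝ) < i := Nat.cast_pos.mpr h1
  have hd0 : (0:ℝ) < d := Nat.cast_pos.mpr hd
  set x : ℝ := (i : ℝ) / n with hx_def
  have hx0 : 0 < x := div_pos hi0 hn0
  have hx1 : x ≤ 1 := by
    rw [hx_def, div_le_one hn0]
    exact_mod_cast h2
  set y : ℝ := 1 - x with hy_def
  have hy0 : 0 ≤ y := by rw [hy_def]; linarith
  have hy1 : y ≤ 1 := by rw [hy_def]; linarith
  set S : ℝ := ∑ k ∈ Finset.range d, y ^ k with hS_def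
  have hS1 : 1 ≤ S := by
    have := Finset.single_le_sum (f := fun k => y ^ k)
      (fun k _ => pow_nonneg hy0 k) (Finset.mem_range.mpr hd)
    simpa using this
  have hSpos : 0 < S := lt_of_lt_of_le one_pos hS1
  have hSd : S ≤ d := by
    calc S ≤ ∑ _k ∈ Finset.range d, (1:ℝ) :=
          Finset.sum_le_sum fun k _ => pow_le_one₀ hy0 hy1
      _ = d := by simp
  have hfac : x * S = 1 - y ^ d := by
    have h := geom_sum_mul y d
    rw [hS_def]
    linear_combination -h + (∑ k ∈ Finset.range d, y ^ k) * hy_def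
  have hden : 0 < 1 - y ^ d := by rw [← hfac]; positivity
  have hd' : d - 1 + 1 = d := Nat.succ_pred_eq_of_pos hd
  set T : ℝ := ∑ k ∈ Finset.range (d-1), y ^ k with hT_def
  have hT_ge : ((d:ℝ) - 1) * y ^ (d-1) ≤ T := by
    have hcard : (Finset.range (d-1)).card • (y ^ (d-1)) ≤ T := by
      apply Finset.card_nsmul_le_sum
      intro k hk
      exact pow_le_pow_of_le_one hy0 hy1 (Finset.mem_range.mp hk).le
    simpa [Finset.card_range, nsmul_eq_mul, Nat.cast_sub hd] using hcard
  have hS_split : S = T + y ^ (d-1) := by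
    rw [hS_def, hT_def]
    conv_lhs => rw [← hd']
    rw [Finset.sum_range_succ]
  have hS1' : S = 1 + y * T := by
    rw [hS_def, hT_def]
    conv_lhs => rw [← hd']
    rw [geom_sum_succ]
    ring
  have key : ((d:ℝ) - 1) * S * y ≤ (d:ℝ) * (S - 1) := by
    have hid : (d:ℝ) * (S - 1) - ((d:ℝ) - 1) * S * y
        = y * (T - ((d:ℝ) - 1) * y ^ (d-1)) := by
      linear_combination (d:ℝ) * hS1' - ((d:ℝ) - 1) * y * hS_split
    nlinarith [mul_nonneg hy0 (sub_nonneg.mpr hT_ge)]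
  have hyS : S * y = S - S * x := by rw [hy_def]; ring
  have hyS2 : (d:ℝ) * (S * y) = (d:ℝ) * S - (d:ℝ) * (S * x) := by rw [hy_def]; ring
  have key2 : (1 - (d:ℝ)) * (x * S) ≤ S - d := by nlinarith [key, hyS, hyS2]
  have hrw : (n : ℝ) / (d * i) - 1 / (1 - y ^ d) = (S - d) / ((d:ℝ) * x * S) := by
    rw [← hfac, hx_def]
    field_simp
  constructor
  · rw [hrw]
    have h1d : 1 / (d:ℝ) - 1 = (1 - d) / d := by field_simp
    rw [h1d, div_le_div_iff₀ hd0 (by positivity)]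
    nlinarith [mul_le_mul_of_nonneg_left key2 hd0.le]
  · rw [hrw]
    apply div_nonpos_of_nonpos_of_nonneg (by linarith) (by positivity)
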